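/- Let B > 0 and suppose u : [0,∞) → ℝ is a C² solution of u'' + K u = 0 with u(0) = 0, u'(0) > 0, K continuous with K(t) ≥ −B², and u(t) ≠ 0 for all t > 0. If furthermore for some 0 < a < b one has (1 − e^{−2Ba}) ∫_a^b K(t) dt > 2B, then a contradiction arises; i.e., no such nowhere-vanishing solution exists, so u must have a zero in (0,∞). -/

import Mathlib

open Real Set MeasureTheory intervalIntegral

private lemma stmt8_key (B x : ℝ) (hx1 : 1 < x) :
    (1 - (x * x)⁻¹) * (B * ((x + x⁻¹) / 2) / ((x - x⁻¹) / 2) + B) = 2 * B := by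
  have hxpos : (0:ℝ) < x := lt_trans one_pos hx1
  have hx0 : x ≠ 0 := ne_of_gt hxpos
  have hxx : x - x⁻¹ ≠ 0 := by
    intro h
    have h2 : x * (x - x⁻¹) = x * x - 1 := by field_simp
    rw [h, mul_zero] at h2
    nlinarith
  have hx2 : -1 + x ^ 2 ≠ 0 := by nlinarith
  have key := inv_mul_cancel₀ hx2
  field_simp
  linear_combination (B * (x ^ 2 + 1)) * key

/-- If `u` is a `C²` solution of `u'' + K u = 0` on `[0,∞)` with `u(0) = 0`, `u'(0) > 0`,
`K ≥ −B²` with `B > 0`, and `(1 − e^{−2Ba}) ∫_a^b K > 2B` for some `0 < a < b`,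
then `u` must vanish somewhere in `(0,∞)`. -/
theorem stmt8 (B : ℝ) (hB : 0 < B) (K u u' : ℝ → ℝ)
    (hK : ContinuousOn K (Ici 0))
    (hKB : ∀ t ∈ Ici (0 : ℝ), K t ≥ -B ^ 2)
    (hu : ∀ t ∈ Ici (0 : ℝ), HasDerivAt u (u' t) t)
    (hu' : ∀ t ∈ Ici (0 : ℝ), HasDerivAt u' (-(K t * u t)) t)
    (hu0 : u 0 = 0) (hu'0 : 0 < u' 0)
    (a b : ℝ) (ha : 0 < a) (hab : a < b)
    (hint : (1 - Real.exp (-(2 * B * a))) * ∫ t in a..b, K t > 2 * B) :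
    ∃ t ∈ Ioi (0 : ℝ), u t = 0 := by
  by_contra hcon
  push_neg at hcon
  -- hcon : ∀ t ∈ Ioi 0, u t ≠ 0
  have hucont : ContinuousOn u (Ici 0) := fun t ht => (hu t ht).continuousAt.continuousWithinAt
  -- Step 1: u > 0 on (0, ∞)
  have hexists : ∃ t₀ : ℝ, 0 < t₀ ∧ 0 < u t₀ := by
    have hslope : Filter.Tendsto (slope u 0) (nhdsWithin 0 {(0:ℝ)}ᶜ) (nhds (u' 0)) :=
      hasDerivAt_iff_tendsto_slope.mp (hu 0 (by simp))
    have h1 : ∀ᶠ t in nhdsWithin 0 {(0:ℝ)}ᶜ, 0 < slope u 0 t :=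
      hslope.eventually (eventually_gt_nhds hu'0)
    have h2 : ∀ᶠ t in nhdsWithin (0:ℝ) (Ioi 0), 0 < slope u 0 t :=
      h1.filter_mono (nhdsWithin_mono 0 (fun x hx => ne_of_gt hx))
    obtain ⟨t, hts, htpos⟩ := (h2.and self_mem_nhdsWithin).exists
    refine ⟨t, htpos, ?_⟩
    have : slope u 0 t = u t / t := by simp [slope_def_field, hu0]
    rw [this] at hts
    have := mul_pos hts htpos
    rwa [div_mul_cancel₀] at this
    exact ne_of_gt htpos
  obtain ⟨t₀, ht₀, hut₀⟩ := hexists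
  have hupos : ∀ t : ℝ, 0 < t → 0 < u t := by
    intro t ht
    rcases lt_or_gt_of_ne (hcon t ht) with hneg | hpos
    · exfalso
      have hsub : uIcc t₀ t ⊆ Ici (0:ℝ) := by
        intro x hx
        rcases mem_uIcc.mp hx with ⟨h1, _⟩ | ⟨h1, _⟩ <;>
          exact mem_Ici.mpr (by linarith)
      have himg := intermediate_value_uIcc (hucont.mono hsub)
      have h0 : (0:ℝ) ∈ uIcc (u t₀) (u t) :=
        mem_uIcc.mpr (Or.inr ⟨le_of_lt hneg, le_of_lt hut₀⟩)
      obtain ⟨c, hc, hc0⟩ := himg h0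
      have hcpos : 0 < c := by
        rcases mem_uIcc.mp hc with ⟨h1, _⟩ | ⟨h1, _⟩ <;> linarith
      exact hcon c hcpos hc0
    · exact hpos
  have hab0 : (0:ℝ) < b := lt_trans ha hab
  have hua : 0 < u a := hupos a ha
  have hub : 0 < u b := hupos b hab0
  -- Step 2: Wronskian with sinh gives upper bound on u'(a)/u(a)
  have hsa : 0 < Real.sinh (B * a) := Real.sinh_pos_iff.mpr (mul_pos hB ha)
  set W : ℝ → ℝ := fun t => u' t * Real.sinh (B * t) - u t * (B * Real.cosh (B * t)) with hWdef
  have hWderiv : ∀ t ∈ Ici (0:ℝ), HasDerivAt W (-((K t + B ^ 2) * (u t * Real.sinh (B * t)))) t := by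
    intro t ht
    have hid : HasDerivAt (fun s : ℝ => B * s) (B * 1) t := (hasDerivAt_id t).const_mul B
    have hs : HasDerivAt (fun s : ℝ => Real.sinh (B * s)) (Real.cosh (B * t) * (B * 1)) t :=
      (Real.hasDerivAt_sinh (B * t)).comp t hid
    have hc : HasDerivAt (fun s : ℝ => B * Real.cosh (B * s)) (B * (Real.sinh (B * t) * (B * 1))) t :=
      (((Real.hasDerivAt_cosh (B * t)).comp t hid)).const_mul B
    have h1 := ((hu' t ht).mul hs).sub ((hu t ht).mul hc)
    refine HasDerivAt.congr_deriv (f := W) h1 ?_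
    ring
  have hWanti : AntitoneOn W (Icc 0 a) := by
    apply antitoneOn_of_deriv_nonpos (convex_Icc 0 a)
    · exact fun t ht => (hWderiv t (mem_Ici.mpr ht.1)).continuousAt.continuousWithinAt
    · intro t ht
      rw [interior_Icc] at ht
      exact ((hWderiv t (mem_Ici.mpr ht.1.le)).differentiableAt).differentiableWithinAt
    · intro t ht
      rw [interior_Icc] at ht
      rw [(hWderiv t (mem_Ici.mpr ht.1.le)).deriv]
      have h1 := hKB t (mem_Ici.mpr ht.1.le)
      have h2 := hupos t ht.1
      have h3 := Real.sinh_pos_iff.mpr (mul_pos hB ht.1)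
      have h4 : 0 ≤ (K t + B ^ 2) * (u t * Real.sinh (B * t)) :=
        mul_nonneg (by linarith) (mul_nonneg h2.le h3.le)
      linarith
  have hWa : W a ≤ 0 := by
    have h0 : W 0 = 0 := by simp [hWdef, hu0]
    have := hWanti (left_mem_Icc.mpr ha.le) (right_mem_Icc.mpr ha.le) ha.le
    linarith
  have hwa : u' a / u a ≤ B * Real.cosh (B * a) / Real.sinh (B * a) := by
    rw [div_le_div_iff₀ hua hsa]
    have : u' a * Real.sinh (B * a) - u a * (B * Real.cosh (B * a)) ≤ 0 := hWa
    nlinarith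
  -- Step 3: lower bound u'(b)/u(b) ≥ -B
  have hwb : -B ≤ u' b / u b := by
    by_contra hwb
    push_neg at hwb
    have hub' : u' b + B * u b < 0 := by
      have := (div_lt_iff₀ hub).mp hwb
      nlinarith
    set φ : ℝ → ℝ := fun t => (u' t + B * u t) * Real.exp (-(B * t)) with hφdef
    have hφb : φ b < 0 := mul_neg_of_neg_of_pos hub' (Real.exp_pos _)
    have hφderiv : ∀ t ∈ Ici (0:ℝ),
        HasDerivAt φ (-((K t + B ^ 2) * u t * Real.exp (-(B * t)))) t := by
      intro t ht
      have hid : HasDerivAt (fun s : ℝ => -(B * s)) (-(B * 1)) t :=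
        ((hasDerivAt_id t).const_mul B).neg
      have he : HasDerivAt (fun s : ℝ => Real.exp (-(B * s)))
          (Real.exp (-(B * t)) * -(B * 1)) t :=
        hid.exp
      have h1 := ((hu' t ht).add ((hu t ht).const_mul B)).mul he
      refine HasDerivAt.congr_deriv (f := φ) h1 ?_
      simp only [Pi.add_apply]
      ring
    have hφanti : AntitoneOn φ (Ici b) := by
      apply antitoneOn_of_deriv_nonpos (convex_Ici b)
      · exact fun t ht => (hφderiv t (mem_Ici.mpr (le_trans hab0.le ht))).continuousAt.continuousWithinAt
      · intro t ht
        rw [interior_Ici] at ht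
        exact ((hφderiv t (mem_Ici.mpr (le_trans hab0.le ht.le))).differentiableAt).differentiableWithinAt
      · intro t ht
        rw [interior_Ici] at ht
        have ht0 : (0:ℝ) < t := lt_trans hab0 ht
        rw [(hφderiv t (mem_Ici.mpr ht0.le)).deriv]
        have h1 := hKB t (mem_Ici.mpr ht0.le)
        have h2 := hupos t ht0
        have h3 := Real.exp_pos (-(B * t))
        have h4 : 0 ≤ (K t + B ^ 2) * u t * Real.exp (-(B * t)) :=
          mul_nonneg (mul_nonneg (by linarith) h2.le) h3.le
        linarith
    set c : ℝ := -(φ b) * Real.exp (B * b) with hcdef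
    have hcpos : 0 < c := mul_pos (neg_pos.mpr hφb) (Real.exp_pos _)
    have hderiv_le : ∀ t, b ≤ t → u' t ≤ -c := by
      intro t htb
      have h1 : φ t ≤ φ b := hφanti self_mem_Ici (mem_Ici.mpr htb) htb
      have he : Real.exp (B * b) ≤ Real.exp (B * t) :=
        Real.exp_le_exp.mpr (by nlinarith)
      have hut : 0 < u t := hupos t (lt_of_lt_of_le hab0 htb)
      have hid : u' t + B * u t = φ t * Real.exp (B * t) := by
        simp only [hφdef]
        rw [mul_assoc, ← Real.exp_add]
        simp
      have h2 : φ b * Real.exp (B * t) ≤ φ b * Real.exp (B * b) :=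
        mul_le_mul_of_nonpos_left he hφb.le
      have h3 : φ t * Real.exp (B * t) ≤ φ b * Real.exp (B * t) :=
        mul_le_mul_of_nonneg_right h1 (Real.exp_pos _).le
      have hcval : -c = φ b * Real.exp (B * b) := by rw [hcdef]; ring
      rw [hcval]
      nlinarith
    set T : ℝ := b + u b / c + 1 with hTdef
    have hTb : b < T := by
      have : 0 < u b / c := div_pos hub hcpos
      rw [hTdef]; linarith
    have hlinderiv : ∀ t : ℝ, HasDerivAt (fun s : ℝ => c * s) c t := by
      intro t
      simpa using HasDerivAt.const_mul c (hasDerivAt_id' (x := t))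
    have hg : AntitoneOn (fun t => u t + c * t) (Ici b) := by
      apply antitoneOn_of_deriv_nonpos (convex_Ici b)
      · intro t ht
        have := ((hu t (mem_Ici.mpr (le_trans hab0.le ht))).add
          (hlinderiv t))
        exact this.continuousAt.continuousWithinAt
      · intro t ht
        rw [interior_Ici] at ht
        exact (((hu t (mem_Ici.mpr (le_trans hab0.le ht.le))).add
          (hlinderiv t)).differentiableAt).differentiableWithinAt
      · intro t ht
        rw [interior_Ici] at ht
        rw [HasDerivAt.deriv (f := fun t => u t + c * t) ((hu t (mem_Ici.mpr (le_trans hab0.le ht.le))).add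
          (hlinderiv t))]
        have := hderiv_le t ht.le
        linarith
    have hgT : u T + c * T ≤ u b + c * b := hg self_mem_Ici (mem_Ici.mpr hTb.le) hTb.le
    have huT : 0 < u T := hupos T (lt_trans hab0 hTb)
    have hcu : c * (u b / c) = u b := mul_div_cancel₀ (u b) (ne_of_gt hcpos)
    have hcT : c * T = c * b + u b + c := by
      rw [hTdef, mul_add, mul_add, hcu]; ring
    linarith
  -- Step 4: FTC for the Riccati identity on [a,b]
  have hIab : Icc a b ⊆ Ici (0:ℝ) := fun x hx => mem_Ici.mpr (le_trans ha.le hx.1)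
  have hwderiv : ∀ t ∈ Set.uIcc a b,
      HasDerivAt (fun s => u' s / u s) (-K t - (u' t / u t) ^ 2) t := by
    intro t ht
    rw [uIcc_of_le hab.le] at ht
    have hut : 0 < u t := hupos t (lt_of_lt_of_le ha ht.1)
    have h1 := (hu' t (hIab ht)).div (hu t (hIab ht)) (ne_of_gt hut)
    refine HasDerivAt.congr_deriv (f := fun s => u' s / u s) h1 ?_
    field_simp
  have hu'cont : ContinuousOn u' (Icc a b) :=
    fun t ht => (hu' t (hIab ht)).continuousAt.continuousWithinAt
  have hucont' : ContinuousOn u (Icc a b) :=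
    fun t ht => (hu t (hIab ht)).continuousAt.continuousWithinAt
  have hwcont : ContinuousOn (fun s => u' s / u s) (Icc a b) :=
    hu'cont.div hucont' (fun t ht => ne_of_gt (hupos t (lt_of_lt_of_le ha ht.1)))
  have hKint : IntervalIntegrable K volume a b := by
    apply ContinuousOn.intervalIntegrable
    rw [uIcc_of_le hab.le]
    exact hK.mono hIab
  have hw2int : IntervalIntegrable (fun s => (u' s / u s) ^ 2) volume a b := by
    apply ContinuousOn.intervalIntegrable
    rw [uIcc_of_le hab.le]
    exact hwcont.pow 2
  have hinteg : IntervalIntegrable (fun s => -K s - (u' s / u s) ^ 2) volume a b := by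
    apply ContinuousOn.intervalIntegrable
    rw [uIcc_of_le hab.le]
    exact (hK.mono hIab).neg.sub (hwcont.pow 2)
  have hFTC : (∫ t in a..b, (-K t - (u' t / u t) ^ 2)) = u' b / u b - u' a / u a :=
    intervalIntegral.integral_eq_sub_of_hasDerivAt hwderiv hinteg
  have hsplit : (∫ t in a..b, (-K t - (u' t / u t) ^ 2))
      = (∫ t in a..b, -K t) - ∫ t in a..b, (u' t / u t) ^ 2 :=
    intervalIntegral.integral_sub hKint.neg hw2int
  have hnegK : (∫ t in a..b, -K t) = -∫ t in a..b, K t := intervalIntegral.integral_neg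
  have hw2nn : 0 ≤ ∫ t in a..b, (u' t / u t) ^ 2 :=
    intervalIntegral.integral_nonneg hab.le (fun t _ => sq_nonneg _)
  have hKle : (∫ t in a..b, K t) ≤ u' a / u a - u' b / u b := by
    rw [hsplit, hnegK] at hFTC
    linarith
  -- Step 5: final arithmetic
  have hE : Real.exp (-(2 * B * a)) < 1 := by
    rw [Real.exp_lt_one_iff]
    nlinarith
  have hEpos : 0 < 1 - Real.exp (-(2 * B * a)) := by linarith
  have hkey : (1 - Real.exp (-(2 * B * a))) * (B * Real.cosh (B * a) / Real.sinh (B * a) + B)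
      = 2 * B := by
    have hx1 : 1 < Real.exp (B * a) := by
      nlinarith [Real.add_one_le_exp (B * a), mul_pos hB ha]
    set x := Real.exp (B * a) with hxdef
    have hxpos : (0:ℝ) < x := Real.exp_pos _
    have hx0 : x ≠ 0 := ne_of_gt hxpos
    have hxx : x - x⁻¹ ≠ 0 := by
      intro h
      have h2 : x * (x - x⁻¹) = x * x - 1 := by field_simp
      rw [h, mul_zero] at h2
      nlinarith
    have hE2 : Real.exp (-(2 * B * a)) = (x * x)⁻¹ := by
      rw [Real.exp_neg, show (2 * B * a) = B * a + B * a by ring, Real.exp_add]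
    have hcosh : Real.cosh (B * a) = (x + x⁻¹) / 2 := by
      rw [Real.cosh_eq, Real.exp_neg]
    have hsinh : Real.sinh (B * a) = (x - x⁻¹) / 2 := by
      rw [Real.sinh_eq, Real.exp_neg]
    rw [hE2, hcosh, hsinh]
    exact stmt8_key B x hx1
  have hsum : u' a / u a - u' b / u b ≤ B * Real.cosh (B * a) / Real.sinh (B * a) + B := by
    linarith
  have hKle2 : (∫ t in a..b, K t) ≤ B * Real.cosh (B * a) / Real.sinh (B * a) + B :=
    le_trans hKle hsum
  have hfinal := mul_le_mul_of_nonneg_left hKle2 hEpos.le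
  rw [hkey] at hfinal
  linarith
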